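/- Let S ∈ ℝ^{d×d} be symmetric positive semidefinite, let R ∈ ℝ^{d×d} be symmetric positive semidefinite with R² = S, and let W be the Moore–Penrose pseudoinverse of R. Let Σ ∈ ℝ^{d×k} be a matrix each of whose columns lies in Im(S), and let N be the Moore–Penrose pseudoinverse of W·Σ. Then (I_d − 2·R·(W·Σ)·N·W)·Σ = −Σ. (This is the constraint-satisfaction identity showing the LEACE-Switch matrix Â = I − 2W⁺(WΣ_XZ)(WΣ_XZ)⁺W satisfies Â·Σ_XZ = −Σ_XZ.) -/
import Mathlib


open Matrix

/-- Constraint satisfaction for LEACE-Switch: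
`(I − 2·R·(W·Sig)·N·W)·Sig = −Sig`, where `R` is the symmetric PSD square root of the
symmetric PSD matrix `S`, `W = R⁺`, every column of `Sig` lies in `Im(S)`, and
`N = (W·Sig)⁺`. -/
theorem leace_switch_constraint {d k : ℕ}
    (S R W : Matrix (Fin d) (Fin d) ℝ)
    (Sig : Matrix (Fin d) (Fin k) ℝ) (N : Matrix (Fin k) (Fin d) ℝ)
    (hS : S.PosSemidef) (hR : R.PosSemidef) (hRS : R * R = S)
    (hW1 : R * W * R = R) (hW2 : W * R * W = W)
    (hW3 : (R * W)ᵀ = R * W) (hW4 : (W * R)ᵀ = W * R)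
    (hIm : ∀ j, ∃ x : Fin d → ℝ, S.mulVec x = fun i => Sig i j)
    (hN1 : (W * Sig) * N * (W * Sig) = W * Sig) (hN2 : N * (W * Sig) * N = N)
    (hN3 : ((W * Sig) * N)ᵀ = (W * Sig) * N) (hN4 : (N * (W * Sig))ᵀ = N * (W * Sig)) :
    ((1 : Matrix (Fin d) (Fin d) ℝ) - (2 : ℝ) • (R * (W * Sig) * N * W)) * Sig = -Sig := by
  choose X hX using hIm
  have hSig : S * (Matrix.of fun i j => X j i) = Sig := by
    ext i j
    simpa [Matrix.mul_apply, Matrix.mulVec, dotProduct] using congrFun (hX j) i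
  have h1 : R * W * Sig = Sig := by
    calc R * W * Sig = R * W * (R * R * Matrix.of fun i j => X j i) := by rw [hRS, hSig]
      _ = (R * W * R) * (R * Matrix.of fun i j => X j i) := by
          simp only [Matrix.mul_assoc]
      _ = R * R * Matrix.of fun i j => X j i := by rw [hW1, Matrix.mul_assoc]
      _ = Sig := by rw [hRS, hSig]
  have hM : R * (W * Sig) * N * W * Sig = Sig := by
    calc R * (W * Sig) * N * W * Sig
        = R * ((W * Sig) * N * (W * Sig)) := by simp only [Matrix.mul_assoc]
      _ = R * (W * Sig) := by rw [hN1]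
      _ = Sig := by rw [← Matrix.mul_assoc]; exact h1
  rw [Matrix.sub_mul, Matrix.one_mul, Matrix.smul_mul, hM]
  module
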